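/- A labelling Lab is a complete labelling of Γ if and only if there exists a complete extension T of Γ with Lab = Ext2Lab(T); moreover this correspondence T ↦ Ext2Lab(T) is a bijection between complete extensions and complete labellings. -/
import Mathlib


variable {α : Type*}

inductive Label | IN | OUT | UNDEC
deriving DecidableEq

def conflictFree (att : α → α → Prop) (T : Set α) : Prop :=
  ∀ a ∈ T, ∀ b ∈ T, ¬ att a b

def acceptable (att : α → α → Prop) (T : Set α) (a : α) : Prop :=
  ∀ b, att b a → ∃ c ∈ T, att c b

def admissible (att : α → α → Prop) (T : Set α) : Prop :=
  conflictFree att T ∧ ∀ a ∈ T, acceptable att T a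

def complete (att : α → α → Prop) (T : Set α) : Prop :=
  admissible att T ∧ ∀ a, acceptable att T a → a ∈ T

def completeLab (att : α → α → Prop) (Lab : α → Label) : Prop :=
  (∀ a, Lab a = Label.IN ↔ ∀ b, att b a → Lab b = Label.OUT) ∧
  (∀ a, Lab a = Label.OUT ↔ ∃ b, att b a ∧ Lab b = Label.IN)

open Classical in
noncomputable def ext2Lab (att : α → α → Prop) (T : Set α) (a : α) : Label :=
  if a ∈ T then Label.IN
  else if ∃ b ∈ T, att b a then Label.OUT
  else Label.UNDEC

lemma ext2Lab_eq_IN (att : α → α → Prop) (T : Set α) (a : α) :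
    ext2Lab att T a = Label.IN ↔ a ∈ T := by
  unfold ext2Lab
  split_ifs with h1 h2 <;> simp [h1]

lemma ext2Lab_complete (att : α → α → Prop) (T : Set α) (hT : complete att T) :
    completeLab att (ext2Lab att T) := by
  obtain ⟨⟨hcf, hadm⟩, hcomp⟩ := hT
  have hOUT : ∀ a, ext2Lab att T a = Label.OUT ↔ ∃ b ∈ T, att b a := by
    intro a
    unfold ext2Lab
    split_ifs with h1 h2
    · constructor
      · intro h; exact h.elim
      · rintro ⟨b, hb, hba⟩
        exact absurd hba (hcf b hb a h1)
    · simpa using h2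
    · simpa using h2
  constructor
  · intro a
    rw [ext2Lab_eq_IN]
    constructor
    · intro ha b hba
      rw [hOUT]
      exact hadm a ha b hba
    · intro h
      apply hcomp
      intro b hba
      have := h b hba
      rw [hOUT] at this
      exact this
  · intro a
    rw [hOUT]
    constructor
    · rintro ⟨b, hb, hba⟩
      exact ⟨b, hba, (ext2Lab_eq_IN att T b).mpr hb⟩
    · rintro ⟨b, hba, hb⟩
      exact ⟨b, (ext2Lab_eq_IN att T b).mp hb, hba⟩

lemma lab_complete (att : α → α → Prop) (Lab : α → Label) (h : completeLab att Lab) :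
    complete att {a | Lab a = Label.IN} ∧ Lab = ext2Lab att {a | Lab a = Label.IN} := by
  obtain ⟨hIN, hOUT⟩ := h
  set T := {a | Lab a = Label.IN} with hTdef
  have hmem : ∀ a, a ∈ T ↔ Lab a = Label.IN := fun a => Iff.rfl
  have hcf : conflictFree att T := by
    intro a ha b hb hab
    have : Lab a = Label.OUT := (hIN b).mp hb a hab
    rw [(hmem a).mp ha] at this
    exact Label.noConfusion this
  have hacc : ∀ a ∈ T, acceptable att T a := by
    intro a ha b hba
    have hb : Lab b = Label.OUT := (hIN a).mp ha b hba
    obtain ⟨c, hcb, hc⟩ := (hOUT b).mp hb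
    exact ⟨c, hc, hcb⟩
  have hcomp : complete att T := by
    refine ⟨⟨hcf, hacc⟩, ?_⟩
    intro a hacc'
    rw [hmem, hIN]
    intro b hba
    obtain ⟨c, hc, hcb⟩ := hacc' b hba
    exact (hOUT b).mpr ⟨c, hcb, hc⟩
  refine ⟨hcomp, ?_⟩
  funext a
  unfold ext2Lab
  split_ifs with h1 h2
  · exact h1
  · obtain ⟨b, hb, hba⟩ := h2
    exact (hOUT a).mpr ⟨b, hba, hb⟩
  · cases hl : Lab a with
    | IN => exact absurd hl h1
    | OUT =>
      obtain ⟨b, hba, hb⟩ := (hOUT a).mp hl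
      exact absurd ⟨b, hb, hba⟩ h2
    | UNDEC => rfl

theorem completeLab_iff_ext2Lab (att : α → α → Prop) :
    (∀ Lab : α → Label, completeLab att Lab ↔
        ∃ T : Set α, complete att T ∧ Lab = ext2Lab att T) ∧
    Set.BijOn (ext2Lab att) {T : Set α | complete att T}
      {Lab : α → Label | completeLab att Lab} := by
  have hmain : ∀ Lab : α → Label, completeLab att Lab ↔
      ∃ T : Set α, complete att T ∧ Lab = ext2Lab att T := by
    intro Lab
    constructor
    · intro h
      obtain ⟨h1, h2⟩ := lab_complete att Lab h
      exact ⟨_, h1, h2⟩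
    · rintro ⟨T, hT, rfl⟩
      exact ext2Lab_complete att T hT
  refine ⟨hmain, ?_, ?_, ?_⟩
  · intro T hT
    exact ext2Lab_complete att T hT
  · intro T1 h1 T2 h2 heq
    ext a
    rw [← ext2Lab_eq_IN att T1 a, ← ext2Lab_eq_IN att T2 a, heq]
  · intro Lab hLab
    obtain ⟨T, hT, heq⟩ := (hmain Lab).mp hLab
    exact ⟨T, hT, heq.symm⟩
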